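/- arXiv:1804.02624 — 3 statements merged into one kernel-verified Lean document; each statement's English description precedes it below -/
import Mathlib

section
/- (Asymptotic Theorem 1.) Fix t ≥ 0 and ε > 0. For each positive integer k, let (Ω_k, μ_k) be a probability space and X^{(k)} : Ω_k → ℝ^k a random vector with components in L⁴(μ_k), mean vector m^{(k)}, and average variance v_k := (1/k) ∑_i Var(X^{(k)}_i), such that for every i ≤ k, ∑_{j=1}^k cov((X^{(k)}_i − m^{(k)}_i)², (X^{(k)}_j − m^{(k)}_j)²) ≤ t. Then μ_k{ |‖X^{(k)} − m^{(k)}‖²/k − v_k| ≥ ε } → 0 as k → ∞; i.e., the normalized squared distance of instances from the centroid is almost surely the average variance, so the instances form a thin shell about the centroid. -/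
open MeasureTheory ProbabilityTheory Filter

/-- Covariance of two real-valued random variables: `cov (U, V) = E[UV] − E[U]·E[V]`. -/
noncomputable def cov {Ω : Type*} [MeasurableSpace Ω] (μ : Measure Ω) (U V : Ω → ℝ) : ℝ :=
  (∫ ω, U ω * V ω ∂μ) - (∫ ω, U ω ∂μ) * (∫ ω, V ω ∂μ)

private lemma half_eq' : (1:ENNReal)/2 = 1/4 + 1/4 := by
  rw [ENNReal.div_add_div_same,
    ENNReal.div_eq_div_iff (by norm_num) (by norm_num) (by norm_num) (by norm_num)]
  norm_num

private lemma one_eq' : (1:ENNReal)/1 = 1/2 + 1/2 := by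
  rw [ENNReal.div_add_div_same, eq_comm,
    ENNReal.div_eq_div_iff (by norm_num) (by norm_num) (by norm_num) (by norm_num)]
  norm_num

private lemma memLp2_sq {Ω : Type*} [MeasurableSpace Ω] {μ : Measure Ω} {f : Ω → ℝ}
    (hf : MemLp f 4 μ) : MemLp (fun ω => f ω ^ 2) 2 μ := by
  haveI : ENNReal.HolderTriple 4 4 2 := ⟨by simpa [one_div] using half_eq'.symm⟩
  have h := hf.smul (𝕜 := ℝ) hf (r := 2)
  simpa [smul_eq_mul, pow_two, Pi.mul_def] using h

private lemma int_mul' {Ω : Type*} [MeasurableSpace Ω] {μ : Measure Ω} {f g : Ω → ℝ}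
    (hf : MemLp f 2 μ) (hg : MemLp g 2 μ) : Integrable (fun ω => f ω * g ω) μ := by
  haveI : ENNReal.HolderTriple 2 2 1 := ⟨by simpa [one_div] using one_eq'.symm⟩
  have h := hg.smul (𝕜 := ℝ) hf (r := 1)
  rw [memLp_one_iff_integrable] at h
  have : (fun ω => f ω * g ω) = f • g := by ext ω; simp [smul_eq_mul]
  rw [this]; exact h

private lemma var_sum {Ω : Type*} [MeasurableSpace Ω] {μ : Measure Ω}
    [IsProbabilityMeasure μ] {k : ℕ} (Y : Fin k → Ω → ℝ) (hY : ∀ i, MemLp (Y i) 2 μ) :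
    variance (fun ω => ∑ i, Y i ω) μ = ∑ i, ∑ j, cov μ (Y i) (Y j) := by
  have hsum : MemLp (fun ω => ∑ i, Y i ω) 2 μ :=
    memLp_finset_sum Finset.univ fun i _ => hY i
  rw [variance_eq_sub hsum]
  have h1 : μ[(fun ω => ∑ i, Y i ω) ^ 2] = ∑ i, ∑ j, ∫ ω, Y i ω * Y j ω ∂μ := by
    calc μ[(fun ω => ∑ i, Y i ω) ^ 2] = ∫ ω, ∑ i, ∑ j, Y i ω * Y j ω ∂μ := by
          congr 1; ext ω
          simp only [Pi.pow_apply]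
          rw [pow_two, Finset.sum_mul_sum]
      _ = ∑ i, ∑ j, ∫ ω, Y i ω * Y j ω ∂μ := by
          rw [integral_finset_sum _ fun i _ =>
            integrable_finset_sum _ fun j _ => int_mul' (hY i) (hY j)]
          exact Finset.sum_congr rfl fun i _ =>
            integral_finset_sum _ fun j _ => int_mul' (hY i) (hY j)
  have h2 : μ[fun ω => ∑ i, Y i ω] = ∑ i, ∫ ω, Y i ω ∂μ :=
    integral_finset_sum _ fun i _ => (hY i).integrable one_le_two
  rw [h1, h2, pow_two, Finset.sum_mul_sum, ← Finset.sum_sub_distrib]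
  refine Finset.sum_congr rfl fun i _ => ?_
  rw [← Finset.sum_sub_distrib]
  rfl


/-- Asymptotic Theorem 1: with a uniform row-sum covariance bound `t` on the squared centered
components, the probability that the normalized squared distance of `X⁽ᵏ⁾` from its mean
vector deviates from the average variance `v_k` by at least `ε` tends to `0` as `k → ∞`;
instances form a thin shell about the centroid. -/
theorem thin_shell_tendsto (t : ℝ) (ht : 0 ≤ t) (ε : ℝ) (hε : 0 < ε)
    (Ω : ℕ → Type*) (mΩ : ∀ k, MeasurableSpace (Ω k)) (μ : ∀ k, Measure (Ω k))
    (hμ : ∀ k, IsProbabilityMeasure (μ k))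
    (X : ∀ k : ℕ, Ω k → EuclideanSpace ℝ (Fin k))
    (hX : ∀ k (i : Fin k), MemLp (fun ω => X k ω i) 4 (μ k))
    (m : ∀ k : ℕ, EuclideanSpace ℝ (Fin k))
    (hm : ∀ k (i : Fin k), m k i = ∫ ω, X k ω i ∂μ k)
    (v : ℕ → ℝ)
    (hv : ∀ k, v k = (1 / (k : ℝ)) * ∑ i, variance (fun ω => X k ω i) (μ k))
    (hcov : ∀ k (i : Fin k),
      ∑ j, cov (μ k) (fun ω => (X k ω i - m k i) ^ 2)
        (fun ω => (X k ω j - m k j) ^ 2) ≤ t) :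
    Tendsto (fun k : ℕ => μ k {ω | ε ≤ |‖X k ω - m k‖ ^ 2 / (k : ℝ) - v k|})
      atTop (nhds 0) := by
  -- upper bound sequence
  have hbound : ∀ k : ℕ, 1 ≤ k →
      μ k {ω | ε ≤ |‖X k ω - m k‖ ^ 2 / (k : ℝ) - v k|}
        ≤ ENNReal.ofReal ((t / ε ^ 2) / k) := by
    intro k hk
    haveI := hμ k
    have hkpos : (0:ℝ) < k := by exact_mod_cast hk
    set Y : Fin k → Ω k → ℝ := fun i ω => (X k ω i - m k i) ^ 2 with hYdef
    have hY2 : ∀ i, MemLp (Y i) 2 (μ k) := fun i =>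
      memLp2_sq ((hX k i).sub (memLp_const (m k i)))
    set S : Ω k → ℝ := fun ω => (k:ℝ)⁻¹ * ∑ i, Y i ω with hSdef
    have hS : MemLp S 2 (μ k) :=
      (memLp_finset_sum Finset.univ fun i _ => hY2 i).const_mul _
    -- mean of S is v k
    have hES : (μ k)[S] = v k := by
      rw [hSdef]
      simp only []
      rw [integral_const_mul, integral_finset_sum _ fun i _ => (hY2 i).integrable one_le_two,
        hv k, one_div]
      congr 1
      refine Finset.sum_congr rfl fun i _ => ?_
      have hX2 : MemLp (fun ω => X k ω i) 2 (μ k) :=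
        (hX k i).mono_exponent (by norm_num)
      rw [variance_eq_integral hX2.aemeasurable]
      simp only [hYdef]
      congr 1
      ext ω
      simp [hm k i]
    -- variance bound
    have hvarS : variance S (μ k) ≤ t / k := by
      have : variance S (μ k) = ((k:ℝ)⁻¹) ^ 2 * variance (fun ω => ∑ i, Y i ω) (μ k) := by
        rw [hSdef]; exact variance_const_mul _ _ _
      rw [this, var_sum Y hY2]
      have hsum : ∑ i, ∑ j, cov (μ k) (Y i) (Y j) ≤ (k:ℝ) * t := by
        calc ∑ i : Fin k, ∑ j, cov (μ k) (Y i) (Y j) ≤ ∑ i : Fin k, t :=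
              Finset.sum_le_sum fun i _ => hcov k i
          _ = (k:ℝ) * t := by simp [mul_comm]
      calc ((k:ℝ)⁻¹) ^ 2 * ∑ i, ∑ j, cov (μ k) (Y i) (Y j)
          ≤ ((k:ℝ)⁻¹) ^ 2 * ((k:ℝ) * t) := by
            apply mul_le_mul_of_nonneg_left hsum (by positivity)
        _ = t / k := by field_simp
    -- set equality
    have hset : {ω | ε ≤ |‖X k ω - m k‖ ^ 2 / (k : ℝ) - v k|}
        = {ω | ε ≤ |S ω - (μ k)[S]|} := by
      ext ω
      have hnorm : ‖X k ω - m k‖ ^ 2 = ∑ i, Y i ω := by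
        rw [EuclideanSpace.norm_eq, Real.sq_sqrt (by positivity)]
        refine Finset.sum_congr rfl fun i _ => ?_
        simp [hYdef, Real.norm_eq_abs, sq_abs]
      simp only [Set.mem_setOf_eq, hES, hnorm, hSdef, div_eq_inv_mul]
      rw [← hSdef, hES]
    rw [hset]
    calc μ k {ω | ε ≤ |S ω - (μ k)[S]|} ≤ ENNReal.ofReal (variance S (μ k) / ε ^ 2) :=
          meas_ge_le_variance_div_sq hS hε
      _ ≤ ENNReal.ofReal ((t / ε ^ 2) / k) := by
          apply ENNReal.ofReal_le_ofReal
          rw [div_div, mul_comm (ε^2) (k:ℝ), ← div_div]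
          gcongr
  -- squeeze
  have htend : Tendsto (fun k : ℕ => ENNReal.ofReal ((t / ε ^ 2) / k)) atTop (nhds 0) := by
    have h1 : Tendsto (fun k : ℕ => (t / ε ^ 2) / k) atTop (nhds 0) :=
      tendsto_const_div_atTop_nhds_zero_nat _
    have := ENNReal.tendsto_ofReal h1
    simpa using this
  refine tendsto_of_tendsto_of_tendsto_of_le_of_le' tendsto_const_nhds htend
    (Eventually.of_forall fun k => zero_le) ?_
  filter_upwards [eventually_ge_atTop 1] with k hk
  exact hbound k hk
end

section
/- (Only-if direction of Theorem 2, exact form.) Let (Ω, μ) be a probability space, k a positive integer, and X₁, X₂, Y, Y' : Ω → ℝ^k random vectors with square-integrable components such that Y is identically distributed with X₁, Y' is identically distributed with X₂, and Y is independent of X₁ and of X₂, and Y' is independent of X₁ and of X₂ (as ℝ^k-valued random variables). If E[‖Y − X₁‖²] = E[‖Y − X₂‖²] and E[‖Y' − X₂‖²] = E[‖Y' − X₁‖²], then Var(X₁) = Var(X₂) and E(X₁) = E(X₂); i.e., X₁ and X₂ have the same mean vector and the same average variance, forming a distribution-cluster. -/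
open MeasureTheory ProbabilityTheory

private lemma euclid_normsq {k : ℕ} (x : EuclideanSpace ℝ (Fin k)) :
    ‖x‖ ^ 2 = ∑ i, (x i) ^ 2 := by
  rw [EuclideanSpace.norm_eq, Real.sq_sqrt (by positivity)]
  simp [sq_abs]

/-- Expansion of `∫ (f - g)²` for independent square-integrable real random variables. -/
private lemma integral_sub_sq {Ω : Type*} [MeasurableSpace Ω] (μ : Measure Ω)
    [IsProbabilityMeasure μ] {f g : Ω → ℝ} (hf : MemLp f 2 μ) (hg : MemLp g 2 μ)
    (hind : IndepFun f g μ) :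
    ∫ ω, (f ω - g ω) ^ 2 ∂μ =
      (∫ ω, f ω ^ 2 ∂μ) + (∫ ω, g ω ^ 2 ∂μ) - 2 * ((∫ ω, f ω ∂μ) * ∫ ω, g ω ∂μ) := by
  have hf2 : Integrable (fun ω => f ω ^ 2) μ := hf.integrable_sq
  have hg2 : Integrable (fun ω => g ω ^ 2) μ := hg.integrable_sq
  have hfg : Integrable (fun ω => f ω * g ω) μ :=
    hind.integrable_mul (hf.integrable one_le_two) (hg.integrable one_le_two)
  have hmul : ∫ ω, f ω * g ω ∂μ = (∫ ω, f ω ∂μ) * ∫ ω, g ω ∂μ :=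
    hind.integral_fun_mul_eq_mul_integral (hf.integrable one_le_two).aestronglyMeasurable (hg.integrable one_le_two).aestronglyMeasurable
  have : ∫ ω, (f ω - g ω) ^ 2 ∂μ
      = ∫ ω, (f ω ^ 2 + g ω ^ 2 - 2 * (f ω * g ω)) ∂μ := by
    congr 1; funext ω; ring
  have h3 : ∫ ω, (f ω ^ 2 + g ω ^ 2 - 2 * (f ω * g ω)) ∂μ
      = (∫ ω, (f ω ^ 2 + g ω ^ 2) ∂μ) - ∫ ω, 2 * (f ω * g ω) ∂μ :=
    integral_sub (hf2.add hg2) (hfg.const_mul 2)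
  rw [this, h3, integral_add hf2 hg2, integral_const_mul, hmul]

/-- Only-if direction of Theorem 2 (exact form): if `Y ~ X₁` and `Y' ~ X₂` are independent
copies and the cluster-indicator distances agree, i.e. `E[‖Y − X₁‖²] = E[‖Y − X₂‖²]` and
`E[‖Y' − X₂‖²] = E[‖Y' − X₁‖²]`, then `X₁` and `X₂` have the same average variance and the
same mean vector, i.e. they form a distribution-cluster. -/
theorem distribution_cluster_of_indicator {Ω : Type*} [MeasurableSpace Ω] (μ : Measure Ω)
    [IsProbabilityMeasure μ] (k : ℕ) (hk : 0 < k)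
    (X₁ X₂ Y Y' : Ω → EuclideanSpace ℝ (Fin k))
    (hX₁ : ∀ i, MemLp (fun ω => X₁ ω i) 2 μ) (hX₂ : ∀ i, MemLp (fun ω => X₂ ω i) 2 μ)
    (hY : ∀ i, MemLp (fun ω => Y ω i) 2 μ) (hY' : ∀ i, MemLp (fun ω => Y' ω i) 2 μ)
    (hid : IdentDistrib Y X₁ μ μ) (hid' : IdentDistrib Y' X₂ μ μ)
    (hYX₁ : IndepFun Y X₁ μ) (hYX₂ : IndepFun Y X₂ μ)
    (hY'X₁ : IndepFun Y' X₁ μ) (hY'X₂ : IndepFun Y' X₂ μ)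
    (h1 : ∫ ω, ‖Y ω - X₁ ω‖ ^ 2 ∂μ = ∫ ω, ‖Y ω - X₂ ω‖ ^ 2 ∂μ)
    (h2 : ∫ ω, ‖Y' ω - X₂ ω‖ ^ 2 ∂μ = ∫ ω, ‖Y' ω - X₁ ω‖ ^ 2 ∂μ) :
    (1 / (k : ℝ)) * ∑ i, variance (fun ω => X₁ ω i) μ =
        (1 / (k : ℝ)) * ∑ i, variance (fun ω => X₂ ω i) μ ∧
      (fun i => ∫ ω, X₁ ω i ∂μ) = (fun i => ∫ ω, X₂ ω i ∂μ) := by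
  -- Convert the vector integrals into sums of component integrals.
  have conv : ∀ (V W : Ω → EuclideanSpace ℝ (Fin k)),
      (∀ i, MemLp (fun ω => V ω i) 2 μ) → (∀ i, MemLp (fun ω => W ω i) 2 μ) →
      ∫ ω, ‖V ω - W ω‖ ^ 2 ∂μ = ∑ i, ∫ ω, (V ω i - W ω i) ^ 2 ∂μ := by
    intro V W hV hW
    have : ∀ ω, ‖V ω - W ω‖ ^ 2 = ∑ i, (V ω i - W ω i) ^ 2 := by
      intro ω
      rw [euclid_normsq]
      congr
    simp_rw [this]
    exact integral_finset_sum _ fun i _ => ((hV i).sub (hW i)).integrable_sq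
  -- Abbreviations.
  set a : Fin k → ℝ := fun i => ∫ ω, X₁ ω i ∂μ with ha
  set b : Fin k → ℝ := fun i => ∫ ω, X₂ ω i ∂μ with hb
  set A : Fin k → ℝ := fun i => ∫ ω, (X₁ ω i) ^ 2 ∂μ with hA
  set B : Fin k → ℝ := fun i => ∫ ω, (X₂ ω i) ^ 2 ∂μ with hB
  -- Component facts from identical distribution.
  have hidci : ∀ i : Fin k, IdentDistrib (fun ω => Y ω i) (fun ω => X₁ ω i) μ μ :=
    fun i => hid.comp ((measurable_pi_apply i).comp (WithLp.measurable_ofLp 2 _))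
  have hidci' : ∀ i : Fin k, IdentDistrib (fun ω => Y' ω i) (fun ω => X₂ ω i) μ μ :=
    fun i => hid'.comp ((measurable_pi_apply i).comp (WithLp.measurable_ofLp 2 _))
  have hYm : ∀ i, ∫ ω, Y ω i ∂μ = a i := fun i => (hidci i).integral_eq
  have hY'm : ∀ i, ∫ ω, Y' ω i ∂μ = b i := fun i => (hidci' i).integral_eq
  have hYs : ∀ i, ∫ ω, (Y ω i) ^ 2 ∂μ = A i := fun i =>
    ((hidci i).comp (measurable_id.pow_const 2)).integral_eq
  have hY's : ∀ i, ∫ ω, (Y' ω i) ^ 2 ∂μ = B i := fun i =>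
    ((hidci' i).comp (measurable_id.pow_const 2)).integral_eq
  have hYl : ∀ i, MemLp (fun ω => Y ω i) 2 μ := hY
  -- Expand the four integrals.
  have e11 : ∫ ω, ‖Y ω - X₁ ω‖ ^ 2 ∂μ = ∑ i, (A i + A i - 2 * (a i * a i)) := by
    rw [conv Y X₁ hY hX₁]
    refine Finset.sum_congr rfl fun i _ => ?_
    rw [integral_sub_sq μ (hY i) (hX₁ i)
      (hYX₁.comp ((measurable_pi_apply i).comp (WithLp.measurable_ofLp 2 _)) ((measurable_pi_apply i).comp (WithLp.measurable_ofLp 2 _))), hYs i, hYm i]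
  have e12 : ∫ ω, ‖Y ω - X₂ ω‖ ^ 2 ∂μ = ∑ i, (A i + B i - 2 * (a i * b i)) := by
    rw [conv Y X₂ hY hX₂]
    refine Finset.sum_congr rfl fun i _ => ?_
    rw [integral_sub_sq μ (hY i) (hX₂ i)
      (hYX₂.comp ((measurable_pi_apply i).comp (WithLp.measurable_ofLp 2 _)) ((measurable_pi_apply i).comp (WithLp.measurable_ofLp 2 _))), hYs i, hYm i]
  have e22 : ∫ ω, ‖Y' ω - X₂ ω‖ ^ 2 ∂μ = ∑ i, (B i + B i - 2 * (b i * b i)) := by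
    rw [conv Y' X₂ hY' hX₂]
    refine Finset.sum_congr rfl fun i _ => ?_
    rw [integral_sub_sq μ (hY' i) (hX₂ i)
      (hY'X₂.comp ((measurable_pi_apply i).comp (WithLp.measurable_ofLp 2 _)) ((measurable_pi_apply i).comp (WithLp.measurable_ofLp 2 _))), hY's i, hY'm i]
  have e21 : ∫ ω, ‖Y' ω - X₁ ω‖ ^ 2 ∂μ = ∑ i, (B i + A i - 2 * (b i * a i)) := by
    rw [conv Y' X₁ hY' hX₁]
    refine Finset.sum_congr rfl fun i _ => ?_
    rw [integral_sub_sq μ (hY' i) (hX₁ i)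
      (hY'X₁.comp ((measurable_pi_apply i).comp (WithLp.measurable_ofLp 2 _)) ((measurable_pi_apply i).comp (WithLp.measurable_ofLp 2 _))), hY's i, hY'm i]
  rw [e11, e12] at h1
  rw [e22, e21] at h2
  -- Show that the means coincide.
  have hsum : ∑ i, 2 * (a i - b i) ^ 2 = 0 := by
    have key : ∑ i, 2 * (a i - b i) ^ 2
        = (∑ i, (A i + B i - 2 * (a i * b i)) - ∑ i, (A i + A i - 2 * (a i * a i)))
          + (∑ i, (B i + A i - 2 * (b i * a i)) - ∑ i, (B i + B i - 2 * (b i * b i))) := by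
      rw [← Finset.sum_sub_distrib, ← Finset.sum_sub_distrib, ← Finset.sum_add_distrib]
      refine Finset.sum_congr rfl fun i _ => ?_
      ring
    rw [key, h1, h2]
    ring
  have hab : a = b := by
    funext i
    have hz : ∀ i ∈ Finset.univ, 2 * (a i - b i) ^ 2 = 0 :=
      (Finset.sum_eq_zero_iff_of_nonneg fun i _ => by positivity).1 hsum
    have := hz i (Finset.mem_univ i)
    nlinarith [this]
  have hAB : ∑ i, A i = ∑ i, B i := by
    rw [hab] at h1
    have : ∑ i, (A i + A i - 2 * (b i * b i)) - ∑ i, (A i + B i - 2 * (b i * b i)) = 0 := by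
      rw [h1]; ring
    rw [← Finset.sum_sub_distrib] at this
    have : ∑ i, (A i - B i) = 0 := by
      rw [← this]
      refine Finset.sum_congr rfl fun i _ => ?_
      ring
    rw [Finset.sum_sub_distrib] at this
    linarith
  constructor
  · congr 1
    have v1 : ∀ i : Fin k, variance (fun ω => X₁ ω i) μ = A i - a i ^ 2 := by
      intro i
      rw [variance_eq_sub (hX₁ i)]
      rfl
    have v2 : ∀ i : Fin k, variance (fun ω => X₂ ω i) μ = B i - b i ^ 2 := by
      intro i
      rw [variance_eq_sub (hX₂ i)]
      rfl
    simp_rw [v1, v2, Finset.sum_sub_distrib, hAB, hab]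
  · exact hab
end

section
/- (Separability of overlapping clusters.) Let (Ω, μ) be a probability space, k a positive integer, and X, X', Y : Ω → ℝ^k mutually independent random vectors with components in L⁴(μ), where X and X' have the same mean vector m₁ and the same average variance v₁, and Y has mean vector m₂ and average variance v₂. Set Δ := v₂ − v₁ + d(m₁ − m₂) and assume Δ > 0. Suppose there are t₁, t₂ ≥ 0 such that for every coordinate a ≤ k, ∑_{b=1}^k cov((X_a − X'_a)², (X_b − X'_b)²) ≤ t₁ and ∑_{b=1}^k cov((X_a − Y_a)², (X_b − Y_b)²) ≤ t₂. Then μ{ ‖X − X'‖²/k ≥ ‖X − Y‖²/k } ≤ 4(t₁ + t₂)/(k·Δ²); i.e., with high probability in high dimension an instance of the first cluster is strictly closer to another instance of its own cluster than to an instance of the second cluster. -/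
open MeasureTheory ProbabilityTheory

open scoped ENNReal

section Aux

variable {Ω : Type*} [MeasurableSpace Ω] {μ : Measure Ω} [IsProbabilityMeasure μ]

set_option linter.unusedSectionVars false

lemma four_inv_add : (4:ℝ≥0∞)⁻¹ + 4⁻¹ = 2⁻¹ := by
  rw [← two_mul, show (4:ℝ≥0∞) = 2*2 from by norm_num,
    ENNReal.mul_inv (by norm_num) (by norm_num), ← mul_assoc,
    ENNReal.mul_inv_cancel (by norm_num) (by norm_num), one_mul]

lemma sq_memℒp_two {f : Ω → ℝ} (hf : MemLp f 4 μ) : MemLp (fun ω => f ω ^ 2) 2 μ := by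
  have h := hf.smul (φ := f) hf (r := 2) (hpqr := ⟨four_inv_add⟩)
  have he : (f • f) = fun ω => f ω ^ 2 := by funext ω; simp [sq]
  rwa [he] at h

lemma integrable_mul_of_memℒp_two {f g : Ω → ℝ} (hf : MemLp f 2 μ) (hg : MemLp g 2 μ) :
    Integrable (fun ω => f ω * g ω) μ := by
  have h := hg.smul (φ := f) hf (r := 1) (hpqr := ⟨by simp [ENNReal.inv_two_add_inv_two]⟩)
  rw [memLp_one_iff_integrable] at h
  exact (by simpa [smul_eq_mul, Pi.smul_apply] using h : Integrable (f * g) μ)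

lemma integral_sq_sub {U V : Ω → ℝ} (hU : MemLp U 2 μ) (hV : MemLp V 2 μ)
    (h : IndepFun U V μ) :
    ∫ ω, (U ω - V ω) ^ 2 ∂μ =
      variance U μ + variance V μ + ((∫ ω, U ω ∂μ) - ∫ ω, V ω ∂μ) ^ 2 := by
  have hU1 : Integrable U μ := hU.integrable one_le_two
  have hV1 : Integrable V μ := hV.integrable one_le_two
  have hU2 : Integrable (fun ω => U ω ^ 2) μ := hU.integrable_sq
  have hV2 : Integrable (fun ω => V ω ^ 2) μ := hV.integrable_sq
  have hUV : Integrable (fun ω => U ω * V ω) μ := integrable_mul_of_memℒp_two hU hV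
  have hmul : (∫ ω, U ω * V ω ∂μ) = (∫ ω, U ω ∂μ) * ∫ ω, V ω ∂μ := by
    simpa [Pi.mul_apply] using h.integral_mul_eq_mul_integral hU1.1 hV1.1
  have hexp : (fun ω => (U ω - V ω) ^ 2)
      = fun ω => U ω ^ 2 - 2 * (U ω * V ω) + V ω ^ 2 := by
    funext ω; ring
  rw [hexp, integral_add (by exact (hU2.sub (hUV.const_mul 2))) hV2,
    integral_sub hU2 (hUV.const_mul 2), integral_const_mul, hmul]
  have hvu : variance U μ = (∫ ω, U ω ^ 2 ∂μ) - (∫ ω, U ω ∂μ) ^ 2 := by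
    simpa [sq] using variance_eq_sub hU
  have hvv : variance V μ = (∫ ω, V ω ^ 2 ∂μ) - (∫ ω, V ω ∂μ) ^ 2 := by
    simpa [sq] using variance_eq_sub hV
  rw [hvu, hvv]; ring

lemma variance_sum_eq_cov {k : ℕ} (U : Fin k → Ω → ℝ) (hU : ∀ a, MemLp (U a) 2 μ) :
    variance (fun ω => ∑ a, U a ω) μ = ∑ a, ∑ b, cov μ (U a) (U b) := by
  have hS : MemLp (fun ω => ∑ a, U a ω) 2 μ := by
    have h := memLp_finset_sum' (μ := μ) (p := 2) Finset.univ (f := U) (fun a _ => hU a)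
    have he : (∑ i, U i) = fun ω => ∑ a, U a ω := by funext ω; simp
    rwa [he] at h
  have hmul : ∀ a b, Integrable (fun ω => U a ω * U b ω) μ :=
    fun a b => integrable_mul_of_memℒp_two (hU a) (hU b)
  have hv := variance_eq_sub hS
  have hsq : ∫ ω, (∑ a, U a ω) ^ 2 ∂μ = ∑ a, ∑ b, ∫ ω, U a ω * U b ω ∂μ := by
    have : (fun ω => (∑ a, U a ω) ^ 2) = fun ω => ∑ a, ∑ b, U a ω * U b ω := by
      funext ω; rw [sq, Finset.sum_mul_sum]
    rw [this, integral_finset_sum _ (fun a _ => integrable_finset_sum _ (fun b _ => hmul a b))]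
    exact Finset.sum_congr rfl fun a _ => integral_finset_sum _ fun b _ => hmul a b
  have hmean : ∫ ω, (∑ a, U a ω) ∂μ = ∑ a, ∫ ω, U a ω ∂μ :=
    integral_finset_sum _ fun a _ => (hU a).integrable one_le_two
  calc variance (fun ω => ∑ a, U a ω) μ
      = (∫ ω, (∑ a, U a ω) ^ 2 ∂μ) - (∫ ω, (∑ a, U a ω) ∂μ) ^ 2 := by
        simpa [sq] using hv
    _ = ∑ a, ∑ b, cov μ (U a) (U b) := by
        rw [hsq, hmean, sq, Finset.sum_mul_sum]
        rw [← Finset.sum_sub_distrib]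
        refine Finset.sum_congr rfl fun a _ => ?_
        rw [← Finset.sum_sub_distrib]
        rfl

lemma euclidean_norm_sq {k : ℕ} (v : EuclideanSpace ℝ (Fin k)) :
    ‖v‖ ^ 2 = ∑ a, (v a) ^ 2 := by
  rw [EuclideanSpace.norm_eq, Real.sq_sqrt (by positivity)]
  simp [Real.norm_eq_abs, sq_abs]

end Aux

/-- Separability of overlapping clusters: let `X, X', Y : Ω → ℝᵏ` be mutually independent,
with `X, X'` from a cluster with mean `m₁` and average variance `v₁` and `Y` from a cluster
with mean `m₂` and average variance `v₂`. If `Δ = v₂ − v₁ + d(m₁ − m₂) > 0` and the row-sum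
covariance bounds `t₁` (for `(X − X')²` coordinates) and `t₂` (for `(X − Y)²` coordinates)
hold, then `X` fails to be strictly closer to `X'` than to `Y` with probability at most
`4(t₁ + t₂)/(k·Δ²)`. -/
theorem cluster_separability {Ω : Type*} [MeasurableSpace Ω]
    (μ : Measure Ω) [IsProbabilityMeasure μ] (k : ℕ) (hk : 0 < k)
    (X X' Y : Ω → EuclideanSpace ℝ (Fin k))
    (hX : ∀ a : Fin k, MemLp (fun ω => X ω a) 4 μ)
    (hX' : ∀ a : Fin k, MemLp (fun ω => X' ω a) 4 μ)
    (hY : ∀ a : Fin k, MemLp (fun ω => Y ω a) 4 μ)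
    (hindep : iIndepFun (m := fun _ : Fin 3 => (inferInstance :
      MeasurableSpace (EuclideanSpace ℝ (Fin k)))) ![X, X', Y] μ)
    (m₁ m₂ : EuclideanSpace ℝ (Fin k)) (v₁ v₂ : ℝ)
    (hmX : ∀ a : Fin k, (∫ ω, X ω a ∂μ) = m₁ a)
    (hmX' : ∀ a : Fin k, (∫ ω, X' ω a ∂μ) = m₁ a)
    (hmY : ∀ a : Fin k, (∫ ω, Y ω a ∂μ) = m₂ a)
    (hvX : (1 / (k : ℝ)) * ∑ a, variance (fun ω => X ω a) μ = v₁)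
    (hvX' : (1 / (k : ℝ)) * ∑ a, variance (fun ω => X' ω a) μ = v₁)
    (hvY : (1 / (k : ℝ)) * ∑ a, variance (fun ω => Y ω a) μ = v₂)
    (Δ : ℝ) (hΔdef : Δ = v₂ - v₁ + ‖m₁ - m₂‖ ^ 2 / (k : ℝ)) (hΔ : 0 < Δ)
    (t₁ t₂ : ℝ) (ht₁ : 0 ≤ t₁) (ht₂ : 0 ≤ t₂)
    (hcov₁ : ∀ a : Fin k,
      ∑ b, cov μ (fun ω => (X ω a - X' ω a) ^ 2) (fun ω => (X ω b - X' ω b) ^ 2) ≤ t₁)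
    (hcov₂ : ∀ a : Fin k,
      ∑ b, cov μ (fun ω => (X ω a - Y ω a) ^ 2) (fun ω => (X ω b - Y ω b) ^ 2) ≤ t₂) :
    μ {ω | ‖X ω - Y ω‖ ^ 2 / (k : ℝ) ≤ ‖X ω - X' ω‖ ^ 2 / (k : ℝ)} ≤
      ENNReal.ofReal (4 * (t₁ + t₂) / (k * Δ ^ 2)) := by
  have hkR : (0:ℝ) < (k:ℝ) := Nat.cast_pos.mpr hk
  have hk0 : (k:ℝ) ≠ 0 := hkR.ne'
  -- coordinate differences
  set U : Fin k → Ω → ℝ := fun a ω => (X ω a - X' ω a) ^ 2 with hUdef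
  set V : Fin k → Ω → ℝ := fun a ω => (X ω a - Y ω a) ^ 2 with hVdef
  set S : Ω → ℝ := fun ω => ∑ a, U a ω with hSdef
  set T : Ω → ℝ := fun ω => ∑ a, V a ω with hTdef
  -- MemLp facts
  have hX2 : ∀ a, MemLp (fun ω => X ω a) 2 μ :=
    fun a => (hX a).mono_exponent (by norm_num)
  have hX'2 : ∀ a, MemLp (fun ω => X' ω a) 2 μ :=
    fun a => (hX' a).mono_exponent (by norm_num)
  have hY2 : ∀ a, MemLp (fun ω => Y ω a) 2 μ :=
    fun a => (hY a).mono_exponent (by norm_num)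
  have hD4 : ∀ a, MemLp (fun ω => X ω a - X' ω a) 4 μ := fun a => (hX a).sub (hX' a)
  have hE4 : ∀ a, MemLp (fun ω => X ω a - Y ω a) 4 μ := fun a => (hX a).sub (hY a)
  have hU2 : ∀ a, MemLp (U a) 2 μ := fun a => sq_memℒp_two (hD4 a)
  have hV2 : ∀ a, MemLp (V a) 2 μ := fun a => sq_memℒp_two (hE4 a)
  have hS2 : MemLp S 2 μ := by
    have h := memLp_finset_sum' (μ := μ) (p := 2) Finset.univ (f := U) (fun a _ => hU2 a)
    have he : (∑ i, U i) = S := by funext ω; simp [hSdef]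
    rwa [he] at h
  have hT2 : MemLp T 2 μ := by
    have h := memLp_finset_sum' (μ := μ) (p := 2) Finset.univ (f := V) (fun a _ => hV2 a)
    have he : (∑ i, V i) = T := by funext ω; simp [hTdef]
    rwa [he] at h
  -- independence of coordinates
  have hXX' : IndepFun X X' μ := by
    have h := hindep.indepFun (i := 0) (j := 1) (by decide)
    simpa using h
  have hXY : IndepFun X Y μ := by
    have h := hindep.indepFun (i := 0) (j := 2) (by decide)
    simpa using h
  have hIa : ∀ a, IndepFun (fun ω => X ω a) (fun ω => X' ω a) μ :=
    fun a => hXX'.comp ((measurable_pi_apply a).comp (WithLp.measurable_ofLp 2 _))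
      ((measurable_pi_apply a).comp (WithLp.measurable_ofLp 2 _))
  have hIb : ∀ a, IndepFun (fun ω => X ω a) (fun ω => Y ω a) μ :=
    fun a => hXY.comp ((measurable_pi_apply a).comp (WithLp.measurable_ofLp 2 _))
      ((measurable_pi_apply a).comp (WithLp.measurable_ofLp 2 _))
  -- sums of variances
  have hsvX : ∑ a, variance (fun ω => X ω a) μ = (k:ℝ) * v₁ := by
    rw [← hvX]; field_simp
  have hsvX' : ∑ a, variance (fun ω => X' ω a) μ = (k:ℝ) * v₁ := by
    rw [← hvX']; field_simp
  have hsvY : ∑ a, variance (fun ω => Y ω a) μ = (k:ℝ) * v₂ := by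
    rw [← hvY]; field_simp
  -- norm of mean difference
  have hmnorm : ‖m₁ - m₂‖ ^ 2 = ∑ a, (m₁ a - m₂ a) ^ 2 := by
    rw [euclidean_norm_sq]
    exact Finset.sum_congr rfl fun a _ => by rw [PiLp.sub_apply]
  -- expected values
  have hES : ∫ ω, S ω ∂μ = 2 * (k:ℝ) * v₁ := by
    rw [hSdef]
    rw [integral_finset_sum _ (fun a _ => ((hU2 a).integrable one_le_two))]
    have key : ∀ a : Fin k, ∫ ω, U a ω ∂μ
        = variance (fun ω => X ω a) μ + variance (fun ω => X' ω a) μ := by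
      intro a
      have h := integral_sq_sub (hX2 a) (hX'2 a) (hIa a)
      rw [hmX a, hmX' a] at h
      simpa [hUdef] using h
    rw [Finset.sum_congr rfl (fun a _ => key a), Finset.sum_add_distrib, hsvX, hsvX']
    ring
  have hET : ∫ ω, T ω ∂μ = 2 * (k:ℝ) * v₁ + (k:ℝ) * Δ := by
    rw [hTdef]
    rw [integral_finset_sum _ (fun a _ => ((hV2 a).integrable one_le_two))]
    have key : ∀ a : Fin k, ∫ ω, V a ω ∂μ
        = variance (fun ω => X ω a) μ + variance (fun ω => Y ω a) μ
          + (m₁ a - m₂ a) ^ 2 := by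
      intro a
      have h := integral_sq_sub (hX2 a) (hY2 a) (hIb a)
      rw [hmX a, hmY a] at h
      simpa [hVdef] using h
    rw [Finset.sum_congr rfl (fun a _ => key a), Finset.sum_add_distrib,
      Finset.sum_add_distrib, hsvX, hsvY, ← hmnorm]
    have : ‖m₁ - m₂‖ ^ 2 = (k:ℝ) * Δ - (k:ℝ) * v₂ + (k:ℝ) * v₁ := by
      rw [hΔdef]; field_simp; ring
    rw [this]; ring
  -- variance bounds
  have hVarS : variance S μ ≤ (k:ℝ) * t₁ := by
    rw [hSdef, variance_sum_eq_cov U hU2]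
    calc ∑ a, ∑ b, cov μ (U a) (U b) ≤ ∑ _a : Fin k, t₁ :=
          Finset.sum_le_sum fun a _ => hcov₁ a
      _ = (k:ℝ) * t₁ := by simp [mul_comm]
  have hVarT : variance T μ ≤ (k:ℝ) * t₂ := by
    rw [hTdef, variance_sum_eq_cov V hV2]
    calc ∑ a, ∑ b, cov μ (V a) (V b) ≤ ∑ _a : Fin k, t₂ :=
          Finset.sum_le_sum fun a _ => hcov₂ a
      _ = (k:ℝ) * t₂ := by simp [mul_comm]
  -- Chebyshev
  have hc : (0:ℝ) < (k:ℝ) * Δ / 2 := by positivity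
  have hcheb1 := meas_ge_le_variance_div_sq (μ := μ) hS2 hc
  have hcheb2 := meas_ge_le_variance_div_sq (μ := μ) hT2 hc
  have hbound1 : variance S μ / ((k:ℝ) * Δ / 2) ^ 2 ≤ 4 * t₁ / ((k:ℝ) * Δ ^ 2) := by
    have h1 : variance S μ / ((k:ℝ) * Δ / 2) ^ 2 ≤ ((k:ℝ) * t₁) / ((k:ℝ) * Δ / 2) ^ 2 :=
      div_le_div_of_nonneg_right hVarS (by positivity) |>.trans_eq rfl
    have h2 : ((k:ℝ) * t₁) / ((k:ℝ) * Δ / 2) ^ 2 = 4 * t₁ / ((k:ℝ) * Δ ^ 2) := by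
      field_simp; ring
    linarith
  have hbound2 : variance T μ / ((k:ℝ) * Δ / 2) ^ 2 ≤ 4 * t₂ / ((k:ℝ) * Δ ^ 2) := by
    have h1 : variance T μ / ((k:ℝ) * Δ / 2) ^ 2 ≤ ((k:ℝ) * t₂) / ((k:ℝ) * Δ / 2) ^ 2 :=
      div_le_div_of_nonneg_right hVarT (by positivity) |>.trans_eq rfl
    have h2 : ((k:ℝ) * t₂) / ((k:ℝ) * Δ / 2) ^ 2 = 4 * t₂ / ((k:ℝ) * Δ ^ 2) := by
      field_simp; ring
    linarith
  -- event inclusion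
  have hsub : {ω | ‖X ω - Y ω‖ ^ 2 / (k : ℝ) ≤ ‖X ω - X' ω‖ ^ 2 / (k : ℝ)}
      ⊆ {ω | (k:ℝ) * Δ / 2 ≤ |S ω - μ[S]|} ∪ {ω | (k:ℝ) * Δ / 2 ≤ |T ω - μ[T]|} := by
    intro ω hω
    simp only [Set.mem_setOf_eq] at hω
    have hTS : T ω ≤ S ω := by
      have h := (div_le_div_iff_of_pos_right hkR).mp hω
      have h1 : ‖X ω - X' ω‖ ^ 2 = S ω := by
        rw [euclidean_norm_sq, hSdef]
        exact Finset.sum_congr rfl fun a _ => by rw [PiLp.sub_apply]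
      have h2 : ‖X ω - Y ω‖ ^ 2 = T ω := by
        rw [euclidean_norm_sq, hTdef]
        exact Finset.sum_congr rfl fun a _ => by rw [PiLp.sub_apply]
      rw [h1, h2] at h
      exact h
    by_contra hcon
    simp only [Set.mem_union, Set.mem_setOf_eq, not_or, not_le] at hcon
    obtain ⟨h1, h2⟩ := hcon
    rw [hES] at h1
    rw [hET] at h2
    rw [abs_lt] at h1 h2
    have hkΔ : 0 < (k:ℝ) * Δ := by positivity
    linarith [h1.2, h2.1]
  calc μ {ω | ‖X ω - Y ω‖ ^ 2 / (k : ℝ) ≤ ‖X ω - X' ω‖ ^ 2 / (k : ℝ)}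
      ≤ μ ({ω | (k:ℝ) * Δ / 2 ≤ |S ω - μ[S]|} ∪ {ω | (k:ℝ) * Δ / 2 ≤ |T ω - μ[T]|}) :=
        measure_mono hsub
    _ ≤ μ {ω | (k:ℝ) * Δ / 2 ≤ |S ω - μ[S]|} + μ {ω | (k:ℝ) * Δ / 2 ≤ |T ω - μ[T]|} :=
        measure_union_le _ _
    _ ≤ ENNReal.ofReal (variance S μ / ((k:ℝ) * Δ / 2) ^ 2)
        + ENNReal.ofReal (variance T μ / ((k:ℝ) * Δ / 2) ^ 2) := add_le_add hcheb1 hcheb2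
    _ ≤ ENNReal.ofReal (4 * t₁ / ((k:ℝ) * Δ ^ 2))
        + ENNReal.ofReal (4 * t₂ / ((k:ℝ) * Δ ^ 2)) :=
        add_le_add (ENNReal.ofReal_le_ofReal hbound1) (ENNReal.ofReal_le_ofReal hbound2)
    _ = ENNReal.ofReal (4 * (t₁ + t₂) / ((k:ℝ) * Δ ^ 2)) := by
        rw [← ENNReal.ofReal_add (by positivity) (by positivity)]
        congr 1
        field_simp
end
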